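/- Fix a vertex v of a strongly connected finite k-graph Λ, let D_v = {λ ∈ Λ : d(λ) = (1,…,1), r(λ) = v} with |D_v| = d_v, and equip ℂ^{D_v} with the inner product ⟨u,w⟩ = Σ_{λ∈D_v} conj(u_λ)·w_λ·ρ(Λ)^{(−1,…,−1)}·x^Λ_{s(λ)}. Let {c^{m,v}}_{m=1}^{d_v−1} be an orthonormal basis of the orthogonal complement of (1,…,1). Then the functions f^{m,v} = Σ_{λ∈D_v} c^{m,v}_λ·Θ_λ satisfy ∫ f^{m,v} dM = 0 and ∫ f^{m,v}·conj(f^{m',v'}) dM = δ_{v,v'}·δ_{m,m'}. -/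

import Mathlib

open MeasureTheory

/-- A (small, combinatorial) model of a higher-rank graph (`k`-graph): a category-like
structure with vertices `V`, paths (morphisms) `P`, range and source maps, a degree
functor `d : P → ℕᵏ`, identities `vert`, partially defined composition, and the unique
factorization property. -/
structure KGraph (k : ℕ) where
  V : Type
  P : Type
  r : P → V
  s : P → V
  d : P → (Fin k → ℕ)
  vert : V → P
  comp : (l m : P) → s l = r m → P
  r_vert : ∀ v, r (vert v) = v
  s_vert : ∀ v, s (vert v) = v
  d_vert : ∀ v, d (vert v) = 0
  vert_inj : Function.Injective vert
  r_comp : ∀ l m h, r (comp l m h) = r l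
  s_comp : ∀ l m h, s (comp l m h) = s m
  d_comp : ∀ l m h, d (comp l m h) = d l + d m
  comp_vert_left : ∀ l, comp (vert (r l)) l (s_vert (r l)) = l
  comp_vert_right : ∀ l, comp l (vert (s l)) ((r_vert (s l)).symm) = l
  comp_assoc : ∀ l m n (h1 : s l = r m) (h2 : s m = r n),
    comp (comp l m h1) n ((s_comp l m h1).trans h2) =
      comp l (comp m n h2) (h1.trans (r_comp m n h2).symm)
  factor : ∀ (l : P) (m n : Fin k → ℕ), d l = m + n →
    ∃! q : P × P, ∃ h : s q.1 = r q.2, comp q.1 q.2 h = l ∧ d q.1 = m ∧ d q.2 = n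

namespace KGraph

variable {k : ℕ}

/-- `Λ` is finite: each `Λⁿ` is a finite set. -/
def IsRowFinite (G : KGraph k) : Prop := ∀ n : Fin k → ℕ, {l : G.P | G.d l = n}.Finite

/-- `Λ` has no sources: `vΛⁿ ≠ ∅` for every vertex `v` and degree `n`. -/
def NoSources (G : KGraph k) : Prop :=
  ∀ (v : G.V) (n : Fin k → ℕ), ∃ l : G.P, G.r l = v ∧ G.d l = n

/-- `Λ` is strongly connected: `vΛw ≠ ∅` for all vertices `v, w`. -/
def StronglyConnected (G : KGraph k) : Prop :=
  ∀ v w : G.V, ∃ l : G.P, G.r l = v ∧ G.s l = w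

/-- The `i`-th vertex adjacency matrix: `Aᵢ(v,w)` is the number of paths of degree
`eᵢ` from `w` to `v`. -/
noncomputable def vertexMatrix (G : KGraph k) (i : Fin k) (v w : G.V) : ℕ :=
  Nat.card {l : G.P // G.d l = Pi.single i 1 ∧ G.r l = v ∧ G.s l = w}

/-- An infinite path in the `k`-graph `G`: a degree-preserving, composition-compatible
assignment of a path `x(p,q)` to every pair `p ≤ q` in `ℕᵏ` (a functor `Ω_k → Λ`). -/
structure InfPath (G : KGraph k) where
  seg : (p q : Fin k → ℕ) → p ≤ q → G.P
  d_seg : ∀ p q h, G.d (seg p q h) = fun i => q i - p i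
  s_r_seg : ∀ p q m (h1 : p ≤ q) (h2 : q ≤ m), G.s (seg p q h1) = G.r (seg q m h2)
  comp_seg : ∀ p q m (h1 : p ≤ q) (h2 : q ≤ m),
    G.comp (seg p q h1) (seg q m h2) (s_r_seg p q m h1 h2) = seg p m (h1.trans h2)

/-- The cylinder set `Z(λ) = {x ∈ Λ^∞ : x(0, d(λ)) = λ}`. -/
def Z (G : KGraph k) (l : G.P) : Set G.InfPath :=
  {x | x.seg 0 (G.d l) (fun i => Nat.zero_le _) = l}

end KGraph


/-- The weight `ρ(Λ)^{(−1,…,−1)}·x^Λ_{s(λ)}` appearing in the inner product on `ℂ^{D_v}`. -/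
noncomputable def KGraph.wt {k : ℕ} (G : KGraph k) (ρ : Fin k → ℝ) (xL : G.V → ℝ)
    (l : G.P) : ℂ :=
  (((∏ i, ρ i)⁻¹ * xL (G.s l) : ℝ) : ℂ)

/-- `d_v = |D_v|`, the number of paths of degree `(1,…,1)` with range `v`. -/
noncomputable def KGraph.dv {k : ℕ} (G : KGraph k) (v : G.V) : ℕ :=
  Nat.card {l : G.P // G.d l = (fun _ => 1) ∧ G.r l = v}

/-- The wavelet function `f = Σ_λ c_λ Θ_λ` attached to a coefficient vector `c`. -/
noncomputable def KGraph.wavelet {k : ℕ} (G : KGraph k) (c : G.P → ℂ) :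
    G.InfPath → ℂ :=
  fun x => ∑ᶠ l : G.P, c l * Set.indicator (G.Z l) (fun _ => (1 : ℂ)) x

lemma KGraph.Z_eq_of_deg_eq {k : ℕ} (G : KGraph k) {l l' : G.P} (h : G.d l = G.d l')
    {x : G.InfPath} (hx : x ∈ G.Z l) (hx' : x ∈ G.Z l') : l = l' := by
  simp only [KGraph.Z, Set.mem_setOf_eq] at hx hx'
  rw [← hx, ← hx']
  congr 1

/-- Let `Λ` be a strongly connected finite `k`-graph with Perron–Frobenius measure `M`.
For each vertex `v` let `{c^{m,v}}_{m=1}^{d_v−1}` (here indexed by `m < d_v − 1`) be an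
orthonormal basis of the orthogonal complement of `(1,…,1)` in `ℂ^{D_v}` with the
weighted inner product `⟨u,w⟩ = Σ_λ conj(u_λ) w_λ ρ(Λ)^{(−1,…,−1)} x^Λ_{s(λ)}`. Then the
functions `f^{m,v} = Σ_{λ∈D_v} c^{m,v}_λ Θ_λ` satisfy `∫ f^{m,v} dM = 0` and
`∫ f^{m,v} conj(f^{m',v'}) dM = δ_{v,v'} δ_{m,m'}`. -/
theorem stmt_11 {k : ℕ} (G : KGraph k) [Fintype G.V] [DecidableEq G.V]
    (hfin : G.IsRowFinite) (hsc : G.StronglyConnected)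
    [MeasurableSpace G.InfPath] (M : Measure G.InfPath) [IsProbabilityMeasure M]
    (hZmeas : ∀ l : G.P, MeasurableSet (G.Z l))
    (xL : G.V → ℝ) (hxpos : ∀ v, 0 < xL v) (hx1 : ∑ v, xL v = 1)
    (ρ : Fin k → ℝ) (hρpos : ∀ i, 0 < ρ i)
    (heig : ∀ (i : Fin k) (v : G.V),
      ∑ w, (G.vertexMatrix i v w : ℝ) * xL w = ρ i * xL v)
    (hM : ∀ l : G.P,
      M (G.Z l) = ENNReal.ofReal ((∏ i, ρ i ^ (G.d l i))⁻¹ * xL (G.s l)))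
    (c : G.V → ℕ → G.P → ℂ)
    (hsupp : ∀ v m l, c v m l ≠ 0 → G.d l = (fun _ => 1) ∧ G.r l = v)
    (hperp : ∀ v m, m < G.dv v - 1 →
      ∑ᶠ l : G.P, (starRingEnd ℂ) (c v m l) * G.wt ρ xL l = 0)
    (honb : ∀ v m m', m < G.dv v - 1 → m' < G.dv v - 1 →
      ∑ᶠ l : G.P, (starRingEnd ℂ) (c v m l) * c v m' l * G.wt ρ xL l =
        if m = m' then 1 else 0) :
    (∀ v m, m < G.dv v - 1 → ∫ x, G.wavelet (c v m) x ∂M = 0) ∧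
    (∀ v v' m m', m < G.dv v - 1 → m' < G.dv v' - 1 →
      ∫ x, G.wavelet (c v m) x * (starRingEnd ℂ) (G.wavelet (c v' m') x) ∂M =
        if v = v' ∧ m = m' then 1 else 0) := by
  classical
  have hS : {l : G.P | G.d l = fun _ => 1}.Finite := hfin _
  set T : Finset G.P := hS.toFinset with hT
  have hmemT : ∀ l : G.P, l ∈ T ↔ G.d l = fun _ => 1 := fun l => hS.mem_toFinset
  have hwt : ∀ l : G.P, G.d l = (fun _ => 1) →
      (((M (G.Z l)).toReal : ℝ) : ℂ) = G.wt ρ xL l := by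
    intro l hl
    have hprod : (∏ i, ρ i ^ (G.d l i)) = ∏ i, ρ i := by
      simp [hl]
    have hnn : 0 ≤ (∏ i, ρ i ^ (G.d l i))⁻¹ * xL (G.s l) :=
      mul_nonneg (inv_nonneg.2 (Finset.prod_nonneg fun i _ =>
        pow_nonneg (hρpos i).le _)) (hxpos _).le
    rw [hM l, ENNReal.toReal_ofReal hnn, hprod]
    rfl
  have hwav : ∀ (c0 : G.P → ℂ), (∀ l, c0 l ≠ 0 → l ∈ T) → ∀ x,
      G.wavelet c0 x = ∑ l ∈ T, c0 l * (G.Z l).indicator (fun _ => (1:ℂ)) x := by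
    intro c0 hc0 x
    refine finsum_eq_finset_sum_of_support_subset _ fun l hl => ?_
    simp only [Function.mem_support] at hl
    exact hc0 l (left_ne_zero_of_mul hl)
  have hint : ∀ (a : G.P → ℂ),
      ∫ x, (∑ l ∈ T, a l * (G.Z l).indicator (fun _ => (1:ℂ)) x) ∂M
        = ∑ l ∈ T, a l * (((M (G.Z l)).toReal : ℝ) : ℂ) := by
    intro a
    rw [integral_finset_sum]
    · refine Finset.sum_congr rfl fun l _ => ?_
      rw [integral_const_mul, integral_indicator_const (1:ℂ) (hZmeas l)]
      simp [Complex.real_smul, measureReal_def]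
    · intro l _
      exact ((integrable_const (1:ℂ)).indicator (hZmeas l)).const_mul _
  have hc : ∀ v m, ∀ l, c v m l ≠ 0 → l ∈ T := fun v m l h =>
    (hmemT l).2 (hsupp v m l h).1
  have hconjwt : ∀ l, (starRingEnd ℂ) (G.wt ρ xL l) = G.wt ρ xL l := fun l =>
    Complex.conj_ofReal _
  constructor
  · intro v m hm
    have h0 := hperp v m hm
    rw [finsum_eq_finset_sum_of_support_subset _ (fun l hl => ?_)] at h0
    · simp only [hwav (c v m) (hc v m)]
      rw [hint]
      have : ∑ l ∈ T, c v m l * (((M (G.Z l)).toReal : ℝ) : ℂ)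
          = ∑ l ∈ T, c v m l * G.wt ρ xL l :=
        Finset.sum_congr rfl fun l hl => by rw [hwt l ((hmemT l).1 hl)]
      rw [this]
      calc ∑ l ∈ T, c v m l * G.wt ρ xL l
          = (starRingEnd ℂ) (∑ l ∈ T, (starRingEnd ℂ) (c v m l) * G.wt ρ xL l) := by
            rw [map_sum]
            exact Finset.sum_congr rfl fun l _ => by
              rw [map_mul, Complex.conj_conj, hconjwt]
        _ = 0 := by rw [h0]; simp
    · simp only [Function.mem_support] at hl
      exact hc v m l fun h => hl (by simp [h])
  · intro v v' m m' hm hm'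
    have key : ∀ x, G.wavelet (c v m) x * (starRingEnd ℂ) (G.wavelet (c v' m') x)
        = ∑ l ∈ T, (c v m l * (starRingEnd ℂ) (c v' m' l)) *
            (G.Z l).indicator (fun _ => (1:ℂ)) x := by
      intro x
      rw [hwav _ (hc v m) x, hwav _ (hc v' m') x, map_sum, Finset.sum_mul_sum]
      refine Finset.sum_congr rfl fun l hl => ?_
      rw [Finset.sum_eq_single_of_mem l hl]
      · by_cases hx : x ∈ G.Z l
        · simp [Set.indicator_of_mem hx]
        · simp [Set.indicator_of_notMem hx]
      · intro l' hl' hne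
        by_cases hx' : x ∈ G.Z l'
        · by_cases hx : x ∈ G.Z l
          · exact absurd (G.Z_eq_of_deg_eq
              (((hmemT l).1 hl).trans ((hmemT l').1 hl').symm) hx hx') hne.symm
          · simp [Set.indicator_of_notMem hx]
        · simp [Set.indicator_of_notMem hx']
    simp only [key]
    rw [hint]
    have : ∑ l ∈ T, c v m l * (starRingEnd ℂ) (c v' m' l) * (((M (G.Z l)).toReal : ℝ) : ℂ)
        = ∑ l ∈ T, c v m l * (starRingEnd ℂ) (c v' m' l) * G.wt ρ xL l :=
      Finset.sum_congr rfl fun l hl => by rw [hwt l ((hmemT l).1 hl)]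
    rw [this]
    by_cases hv : v = v'
    · subst hv
      have h0 := honb v m m' hm hm'
      rw [finsum_eq_finset_sum_of_support_subset _ (fun l hl => ?_)] at h0
      · calc ∑ l ∈ T, c v m l * (starRingEnd ℂ) (c v m' l) * G.wt ρ xL l
            = (starRingEnd ℂ) (∑ l ∈ T,
                (starRingEnd ℂ) (c v m l) * c v m' l * G.wt ρ xL l) := by
              rw [map_sum]
              exact Finset.sum_congr rfl fun l _ => by
                rw [map_mul, map_mul, Complex.conj_conj, hconjwt]
          _ = if v = v ∧ m = m' then 1 else 0 := by
              rw [h0]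
              by_cases hmm : m = m'
              · simp [hmm]
              · simp [hmm]
      · simp only [Function.mem_support] at hl
        have h1 : (starRingEnd ℂ) (c v m l) * c v m' l ≠ 0 := left_ne_zero_of_mul hl
        have h2 : c v m' l ≠ 0 := right_ne_zero_of_mul h1
        exact hc v m' l h2
    · have hzero : ∀ l ∈ T, c v m l * (starRingEnd ℂ) (c v' m' l) * G.wt ρ xL l = 0 := by
        intro l _
        by_cases h1 : c v m l = 0
        · simp [h1]
        · by_cases h2 : c v' m' l = 0
          · simp [h2]
          · exact absurd ((hsupp v m l h1).2.symm.trans (hsupp v' m' l h2).2) hv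
      rw [Finset.sum_eq_zero hzero]
      simp [hv]
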